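/- For every event sequence η on [0,T], writing S(a) = Σ_{t ∈ supp(η), t ≤ a} η(t) for a ∈ [0,T], the discrepancy norm satisfies ‖η‖_D = max{max_{a ∈ [0,T]} S(a), 0} − min{min_{a ∈ [0,T]} S(a), 0}. -/

import Mathlib

open Set Function Filter Classical

/-- The next SOD sampling time after time `s` for input `f`, threshold `θ`, on `[0,T]`:
the infimum of `{t ∈ (s,T] : |f t - f s| ≥ θ}` if this set is nonempty, `none` otherwise. -/
noncomputable def sodNext (T θ : ℝ) (f : ℝ → ℝ) (s : ℝ) : Option ℝ :=
  if (∃ t ∈ Set.Ioc s T, θ ≤ |f t - f s|) then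
    some (sInf {t | t ∈ Set.Ioc s T ∧ θ ≤ |f t - f s|})
  else none

/-- The `k`-th SOD sampling time (`t_0 = 0`), `none` if the recursion has stopped before `k`. -/
noncomputable def sodTime (T θ : ℝ) (f : ℝ → ℝ) : ℕ → Option ℝ
  | 0 => some 0
  | n + 1 => (sodTime T θ f n).bind (sodNext T θ f)

/-- The SOD output event sequence `Φ_θ(f)` : it takes the value `f t_k - f t_{k-1}` at
each sampling time `t_k`, `k ≥ 1`, and `0` elsewhere. -/
noncomputable def sodOut (T θ : ℝ) (f : ℝ → ℝ) : ℝ → ℝ := fun t =>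
  if h : ∃ k : ℕ, ∃ s : ℝ, sodTime T θ f k = some s ∧ sodNext T θ f s = some t
  then f t - f h.choose_spec.choose
  else 0

/-- Membership in `F[0,T]`: continuous on `[0,T]` with `f 0 = 0`. -/
def memF (T : ℝ) (f : ℝ → ℝ) : Prop :=
  ContinuousOn f (Set.Icc 0 T) ∧ f 0 = 0

/-- An event sequence on `[0,T]`: finitely supported with support in `[0,T]`. -/
def IsEventSeq (T : ℝ) (η : ℝ → ℝ) : Prop :=
  (Function.support η).Finite ∧ Function.support η ⊆ Set.Icc 0 T

/-- `η` is `±1`-valued on its support. -/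
def IsPM (η : ℝ → ℝ) : Prop :=
  ∀ t ∈ Function.support η, η t = 1 ∨ η t = -1

/-- Weyl's discrepancy norm `‖η‖_D = sup_{0 ≤ a ≤ b ≤ T} |Σ_{t ∈ [a,b]} η t|`. -/
noncomputable def discNorm (T : ℝ) (η : ℝ → ℝ) : ℝ :=
  sSup {x | ∃ a b : ℝ, 0 ≤ a ∧ a ≤ b ∧ b ≤ T ∧ x = |∑ᶠ t ∈ Set.Icc a b, η t|}

/-- Alexiewicz norm `‖η‖_A = sup_{a ∈ [0,T]} |Σ_{t ∈ [0,a]} η t|`. -/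
noncomputable def alexNorm (T : ℝ) (η : ℝ → ℝ) : ℝ :=
  sSup {x | ∃ a : ℝ, 0 ≤ a ∧ a ≤ T ∧ x = |∑ᶠ t ∈ Set.Icc 0 a, η t|}

/-- The values of `η` at consecutive support points alternate in sign. -/
def Alternating (η : ℝ → ℝ) : Prop :=
  ∀ s u : ℝ, s ∈ Function.support η → u ∈ Function.support η → s < u →
    (∀ t ∈ Function.support η, ¬ (s < t ∧ t < u)) → η s * η u < 0

/-- One `(+−)`-transcription step: erase a `+1` followed (with no support in between) by a `−1`. -/
def StepPM (η η' : ℝ → ℝ) : Prop :=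
  ∃ s u : ℝ, s < u ∧ η s = 1 ∧ η u = -1 ∧ (∀ t : ℝ, s < t → t < u → η t = 0) ∧
    η' = Function.update (Function.update η s 0) u 0

/-- One `(−+)`-transcription step: erase a `−1` followed (with no support in between) by a `+1`. -/
def StepMP (η η' : ℝ → ℝ) : Prop :=
  ∃ s u : ℝ, s < u ∧ η s = -1 ∧ η u = 1 ∧ (∀ t : ℝ, s < t → t < u → η t = 0) ∧
    η' = Function.update (Function.update η s 0) u 0

/-- `StepsN R n x y` : `y` is obtained from `x` by `n` successive `R`-steps. -/
def StepsN (R : (ℝ → ℝ) → (ℝ → ℝ) → Prop) : ℕ → (ℝ → ℝ) → (ℝ → ℝ) → Prop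
  | 0, x, y => x = y
  | n + 1, x, z => ∃ y, R x y ∧ StepsN R n y z

/-- Uniform distance `‖f − g‖_∞` over `[0,T]`. -/
noncomputable def unifDist (T : ℝ) (f g : ℝ → ℝ) : ℝ :=
  sSup {x | ∃ t ∈ Set.Icc 0 T, x = |f t - g t|}

/-- with `S(a) = Σ_{t ∈ supp η, t ≤ a} η t`, the discrepancy norm equals
`max{max_a S(a), 0} − min{min_a S(a), 0}` (max/min over `a ∈ [0,T]`). -/
theorem stmt9 (T : ℝ) (hT : 0 < T) (η : ℝ → ℝ) (hη : IsEventSeq T η) :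
    discNorm T η =
      max (sSup {x | ∃ a ∈ Set.Icc (0:ℝ) T, x = ∑ᶠ t ∈ Set.Iic a, η t}) 0 -
      min (sInf {x | ∃ a ∈ Set.Icc (0:ℝ) T, x = ∑ᶠ t ∈ Set.Iic a, η t}) 0 := by
  obtain ⟨hfin, hsupp⟩ := hη
  set F := hfin.toFinset with hF
  set Sf : ℝ → ℝ := fun a => ∑ t ∈ F.filter (· ≤ a), η t with hSf
  set Sm : ℝ → ℝ := fun a => ∑ t ∈ F.filter (· < a), η t with hSm
  have hIic : ∀ a : ℝ, ∑ᶠ t ∈ Set.Iic a, η t = Sf a := by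
    intro a
    apply finsum_mem_eq_sum_of_inter_support_eq
    ext t
    simp only [Set.mem_inter_iff, Set.mem_Iic, Finset.coe_filter, Set.Finite.mem_toFinset,
      Set.mem_setOf_eq, Function.mem_support, hF]
    tauto
  have hIcc : ∀ a b : ℝ, ∑ᶠ t ∈ Set.Icc a b, η t
      = ∑ t ∈ F.filter (fun t => a ≤ t ∧ t ≤ b), η t := by
    intro a b
    apply finsum_mem_eq_sum_of_inter_support_eq
    ext t
    simp only [Set.mem_inter_iff, Set.mem_Icc, Finset.coe_filter, Set.Finite.mem_toFinset,
      Set.mem_setOf_eq, Function.mem_support, hF]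
    tauto
  have hsplit : ∀ a b : ℝ, a ≤ b → ∑ᶠ t ∈ Set.Icc a b, η t = Sf b - Sm a := by
    intro a b hab
    rw [hIcc]
    have key := Finset.sum_filter_add_sum_filter_not (F.filter (· ≤ b)) (fun t => t < a) η
    have e1 : (F.filter (· ≤ b)).filter (fun t => t < a) = F.filter (· < a) := by
      ext t
      simp only [Finset.mem_filter]
      exact ⟨fun h => ⟨h.1.1, h.2⟩, fun h => ⟨⟨h.1, le_trans h.2.le hab⟩, h.2⟩⟩
    have e2 : (F.filter (· ≤ b)).filter (fun t => ¬ t < a)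
        = F.filter (fun t => a ≤ t ∧ t ≤ b) := by
      ext t
      simp only [Finset.mem_filter, not_lt]
      exact ⟨fun h => ⟨h.1.1, h.2, h.1.2⟩, fun h => ⟨⟨h.1, h.2.2⟩, h.2.1⟩⟩
    rw [e1, e2] at key
    simp only [hSf, hSm]
    linarith [key]
  have hSm0 : Sm 0 = 0 := by
    have he : F.filter (fun t => t < (0:ℝ)) = ∅ := by
      rw [Finset.filter_eq_empty_iff]
      intro t ht h0
      exact absurd (hsupp (hfin.mem_toFinset.mp ht)).1 (not_le.mpr h0)
    simp only [hSm]
    rw [he, Finset.sum_empty]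
  set A := {x | ∃ a ∈ Set.Icc (0:ℝ) T, x = ∑ᶠ t ∈ Set.Iic a, η t} with hAdef
  have hSfA : ∀ b : ℝ, 0 ≤ b → b ≤ T → Sf b ∈ A := by
    intro b h0 h1
    exact ⟨b, ⟨h0, h1⟩, (hIic b).symm⟩
  have hAfin : A.Finite := by
    apply Set.Finite.subset (((F.powerset : Finset (Finset ℝ)).finite_toSet).image
      (fun G => ∑ t ∈ G, η t))
    rintro x ⟨a, _, rfl⟩
    rw [hIic]
    exact ⟨F.filter (· ≤ a), Finset.mem_coe.mpr (Finset.mem_powerset.mpr (Finset.filter_subset _ _)), rfl⟩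
  have hAne : A.Nonempty := ⟨Sf 0, hSfA 0 le_rfl hT.le⟩
  have hbddAb : BddAbove A := hAfin.bddAbove
  have hbddBl : BddBelow A := hAfin.bddBelow
  have hxP : ∀ x ∈ A, x ≤ max (sSup A) 0 := fun x hx =>
    le_trans (le_csSup hbddAb hx) (le_max_left _ _)
  have hxM : ∀ x ∈ A, min (sInf A) 0 ≤ x := fun x hx =>
    le_trans (min_le_left _ _) (csInf_le hbddBl hx)
  set P := max (sSup A) 0 with hP
  set M := min (sInf A) 0 with hM
  have hM0 : M ≤ 0 := min_le_right _ _
  have h0P : 0 ≤ P := le_max_right _ _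
  -- Sm values lie in A ∪ {0}
  have hSm_mem : ∀ a : ℝ, 0 ≤ a → a ≤ T → Sm a = 0 ∨ Sm a ∈ A := by
    intro a _ _
    by_cases hG : (F.filter (fun t => t < a)).Nonempty
    · right
      set c := (F.filter (fun t => t < a)).max' hG with hc
      have hc_mem := Finset.max'_mem _ hG
      have hcF : c ∈ F ∧ c < a := Finset.mem_filter.mp hc_mem
      have hcI : c ∈ Set.Icc 0 T := hsupp (hfin.mem_toFinset.mp hcF.1)
      have hfe : F.filter (fun t => t < a) = F.filter (fun t => t ≤ c) := by
        ext t
        simp only [Finset.mem_filter]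
        constructor
        · rintro ⟨htF, hta⟩
          exact ⟨htF, Finset.le_max' (F.filter (fun t => t < a)) t (Finset.mem_filter.mpr ⟨htF, hta⟩)⟩
        · rintro ⟨htF, htc⟩
          exact ⟨htF, lt_of_le_of_lt htc hcF.2⟩
      have : Sm a = Sf c := by
        simp only [hSm, hSf]
        rw [hfe]
      rw [this]
      exact hSfA c hcI.1 hcI.2
    · left
      rw [Finset.not_nonempty_iff_eq_empty] at hG
      simp only [hSm]
      rw [hG, Finset.sum_empty]
  -- gap lemma
  have hgap : ∀ a b : ℝ, 0 ≤ a → a < b → ∃ c, a < c ∧ c ≤ b ∧ Sm c = Sf a := by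
    intro a b _ hab
    by_cases hG : (F.filter (fun t => a < t ∧ t ≤ b)).Nonempty
    · set c := (F.filter (fun t => a < t ∧ t ≤ b)).min' hG with hc
      have hc_mem := Finset.min'_mem _ hG
      have hcF : c ∈ F ∧ a < c ∧ c ≤ b := Finset.mem_filter.mp hc_mem
      refine ⟨c, hcF.2.1, hcF.2.2, ?_⟩
      have hfe : F.filter (fun t => t < c) = F.filter (fun t => t ≤ a) := by
        ext t
        simp only [Finset.mem_filter]
        constructor
        · rintro ⟨htF, htc⟩
          refine ⟨htF, ?_⟩
          by_contra hta
          push_neg at hta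
          exact absurd (Finset.min'_le (F.filter (fun t => a < t ∧ t ≤ b)) t
            (Finset.mem_filter.mpr ⟨htF, hta, le_trans htc.le hcF.2.2⟩)) (not_le.mpr htc)
        · rintro ⟨htF, hta⟩
          exact ⟨htF, lt_of_le_of_lt hta hcF.2.1⟩
      simp only [hSm, hSf]
      rw [hfe]
    · refine ⟨b, hab, le_rfl, ?_⟩
      have hfe : F.filter (fun t => t < b) = F.filter (fun t => t ≤ a) := by
        ext t
        simp only [Finset.mem_filter]
        constructor
        · rintro ⟨htF, htb⟩
          refine ⟨htF, ?_⟩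
          by_contra hta
          push_neg at hta
          exact hG ⟨t, Finset.mem_filter.mpr ⟨htF, hta, htb.le⟩⟩
        · rintro ⟨htF, hta⟩
          exact ⟨htF, lt_of_le_of_lt hta hab⟩
      simp only [hSm, hSf]
      rw [hfe]
  -- the D set
  set D := {x | ∃ a b : ℝ, 0 ≤ a ∧ a ≤ b ∧ b ≤ T ∧ x = |∑ᶠ t ∈ Set.Icc a b, η t|} with hD
  have hDle : ∀ x ∈ D, x ≤ P - M := by
    rintro x ⟨a, b, ha, hab, hbT, rfl⟩
    rw [hsplit a b hab]
    have hSfb : Sf b ∈ A := hSfA b (le_trans ha hab) hbT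
    have h1 : M ≤ Sf b := hxM _ hSfb
    have h2 : Sf b ≤ P := hxP _ hSfb
    have h34 : M ≤ Sm a ∧ Sm a ≤ P := by
      rcases hSm_mem a ha (le_trans hab hbT) with h | h
      · rw [h]; exact ⟨hM0, h0P⟩
      · exact ⟨hxM _ h, hxP _ h⟩
    rw [abs_le]
    constructor <;> [linarith [h34.2]; linarith [h34.1]]
  have hDne : D.Nonempty := ⟨|∑ᶠ t ∈ Set.Icc (0:ℝ) 0, η t|, 0, 0, le_rfl, le_rfl, hT.le, rfl⟩
  have hDbdd : BddAbove D := ⟨P - M, hDle⟩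
  have hdisc : discNorm T η = sSup D := rfl
  rw [hdisc]
  apply le_antisymm
  · exact csSup_le hDne hDle
  · -- lower bound: exhibit witness
    obtain ⟨aP, haP, haPv⟩ := hAne.csSup_mem hAfin
    obtain ⟨aM, haM, haMv⟩ := hAne.csInf_mem hAfin
    have hsupP : sSup A = Sf aP := by rw [haPv, hIic]
    have hinfM : sInf A = Sf aM := by rw [haMv, hIic]
    have hIS : sInf A ≤ sSup A := csInf_le_csSup hAne hbddBl hbddAb
    suffices h : ∃ x ∈ D, P - M ≤ x by
      obtain ⟨x, hxD, hx⟩ := h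
      exact le_trans hx (le_csSup hDbdd hxD)
    rcases lt_or_ge (sSup A) 0 with hneg | hpos
    · -- all values negative: P = 0, M = sInf A
      have hPv : P = 0 := max_eq_right hneg.le
      have hMv : M = sInf A := min_eq_left (le_trans hIS hneg.le)
      refine ⟨|∑ᶠ t ∈ Set.Icc (0:ℝ) aM, η t|, ⟨0, aM, le_rfl, haM.1, haM.2, rfl⟩, ?_⟩
      rw [hsplit 0 aM haM.1, hSm0, sub_zero, ← hinfM]
      rw [abs_of_nonpos (le_trans hIS hneg.le)]
      linarith [hPv, hMv]
    rcases lt_or_ge 0 (sInf A) with hposI | hnegI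
    · -- all values positive: M = 0, P = sSup A
      have hMv : M = 0 := min_eq_right hposI.le
      have hPv : P = sSup A := max_eq_left (le_trans hposI.le hIS)
      refine ⟨|∑ᶠ t ∈ Set.Icc (0:ℝ) aP, η t|, ⟨0, aP, le_rfl, haP.1, haP.2, rfl⟩, ?_⟩
      rw [hsplit 0 aP haP.1, hSm0, sub_zero, ← hsupP]
      rw [abs_of_nonneg (le_trans hposI.le hIS)]
      linarith [hPv, hMv]
    · -- sSup ≥ 0 ≥ sInf
      have hPv : P = sSup A := max_eq_left hpos
      have hMv : M = sInf A := min_eq_left hnegI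
      rcases lt_trichotomy aP aM with hlt | heq | hgt
      · obtain ⟨c, hac, hcb, hSmc⟩ := hgap aP aM haP.1 hlt
        refine ⟨|∑ᶠ t ∈ Set.Icc c aM, η t|, ⟨c, aM, le_trans haP.1 hac.le, hcb, haM.2, rfl⟩, ?_⟩
        rw [hsplit c aM hcb, hSmc, ← hsupP, ← hinfM]
        rw [abs_of_nonpos (by linarith)]
        linarith [hPv.le, hPv.ge, hMv.le, hMv.ge, hsupP.le, hsupP.ge, hinfM.le, hinfM.ge]
      · refine ⟨|∑ᶠ t ∈ Set.Icc (0:ℝ) 0, η t|, ⟨0, 0, le_rfl, le_rfl, hT.le, rfl⟩, ?_⟩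
        have : sSup A = sInf A := by rw [hsupP, hinfM, heq]
        rw [hPv, hMv, this]
        have := abs_nonneg (∑ᶠ t ∈ Set.Icc (0:ℝ) 0, η t)
        linarith
      · obtain ⟨c, hac, hcb, hSmc⟩ := hgap aM aP haM.1 hgt
        refine ⟨|∑ᶠ t ∈ Set.Icc c aP, η t|, ⟨c, aP, le_trans haM.1 hac.le, hcb, haP.2, rfl⟩, ?_⟩
        rw [hsplit c aP hcb, hSmc, ← hsupP, ← hinfM]
        rw [abs_of_nonneg (by linarith)]
        linarith [hPv.le, hPv.ge, hMv.le, hMv.ge, hsupP.le, hsupP.ge, hinfM.le, hinfM.ge]
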